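/- If a is a positive integer with an odd number of decimal digits (i.e., the length of the decimal digit list of a is odd), then 99 divides a - rev(a), i.e., 99 divides f(a). -/

import Mathlib

/-- Reverse the decimal digits of a natural number. -/
def rev (m : ℕ) : ℕ := Nat.ofDigits 10 (Nat.digits 10 m).reverse

/-- The reflection of an integer: reverse its digits and flip its sign. -/
def reflect (a : ℤ) : ℤ := if 0 ≤ a then -(rev a.toNat : ℤ) else (rev (-a).toNat : ℤ)

/-- The reflective step map. -/
def f (a : ℤ) : ℤ := a + reflect a

lemma ofDigits_append_int (b : ℤ) (l1 l2 : List ℕ) :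
    Nat.ofDigits b (l1 ++ l2) =
      Nat.ofDigits b l1 + b ^ l1.length * Nat.ofDigits b l2 := by
  induction l1 with
  | nil => simp [Nat.ofDigits]
  | cons d t ih =>
    show (d : ℤ) + b * Nat.ofDigits b (t ++ l2) = (d : ℤ) + b * Nat.ofDigits b t + b ^ (t.length + 1) * Nat.ofDigits b l2
    rw [ih, pow_succ']
    ring

lemma ofDigits_neg_one_reverse (L : List ℕ) :
    Nat.ofDigits (-1 : ℤ) L.reverse = (-1) ^ (L.length + 1) * Nat.ofDigits (-1 : ℤ) L := by
  induction L with
  | nil => simp [Nat.ofDigits]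
  | cons d t ih =>
    rw [List.reverse_cons, ofDigits_append_int, ih, List.length_reverse, List.length_cons]
    show _ = (-1 : ℤ) ^ (t.length + 1 + 1) * ((d : ℤ) + (-1) * Nat.ofDigits (-1 : ℤ) t)
    simp [Nat.ofDigits, pow_succ]
    ring

lemma ofDigits_one_reverse (L : List ℕ) :
    Nat.ofDigits (1 : ℤ) L.reverse = Nat.ofDigits (1 : ℤ) L := by
  induction L with
  | nil => rfl
  | cons d t ih =>
    rw [List.reverse_cons, ofDigits_append_int, ih]
    show _ = (d : ℤ) + 1 * Nat.ofDigits (1 : ℤ) t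
    simp [Nat.ofDigits]
    ring

theorem odd_digits_div_99 (a : ℤ) (ha : 0 < a)
    (hodd : Odd (Nat.digits 10 a.toNat).length) :
    (99 : ℤ) ∣ f a := by
  set n := a.toNat with hn
  have han : (n : ℤ) = a := Int.toNat_of_nonneg ha.le
  have hf : f a = (n : ℤ) - (rev n : ℤ) := by
    simp [f, reflect, ha.le, sub_eq_add_neg, hn]
  rw [hf]
  set L := Nat.digits 10 n with hL
  have h1 : (n : ℤ) = Nat.ofDigits (10 : ℤ) L := by
    have := Nat.coe_ofDigits ℤ 10 L
    norm_num at this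
    rw [← this, Nat.ofDigits_digits]
  have h2 : (rev n : ℤ) = Nat.ofDigits (10 : ℤ) L.reverse := by
    have := Nat.coe_ofDigits ℤ 10 L.reverse
    norm_num at this
    rw [rev, this]
  rw [h1, h2]
  have key : ∀ (b' : ℤ) (k : ℕ), (10 : ℤ) ≡ b' [ZMOD k] →
      Nat.ofDigits b' L.reverse = Nat.ofDigits b' L →
      (k : ℤ) ∣ Nat.ofDigits (10 : ℤ) L - Nat.ofDigits (10 : ℤ) L.reverse := by
    intro b' k hb he
    have e1 := Nat.ofDigits_zmodeq' 10 b' k hb L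
    have e2 := Nat.ofDigits_zmodeq' 10 b' k hb L.reverse
    have : Nat.ofDigits (10 : ℤ) L - Nat.ofDigits (10 : ℤ) L.reverse ≡ 0 [ZMOD k] :=
      (e1.sub e2).trans (by rw [he, sub_self])
    exact Int.modEq_zero_iff_dvd.mp this
  have h9 : (9 : ℤ) ∣ Nat.ofDigits (10 : ℤ) L - Nat.ofDigits (10 : ℤ) L.reverse :=
    key 1 9 (by decide) (ofDigits_one_reverse L)
  have h11 : (11 : ℤ) ∣ Nat.ofDigits (10 : ℤ) L - Nat.ofDigits (10 : ℤ) L.reverse := by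
    refine key (-1) 11 (by decide) ?_
    rw [ofDigits_neg_one_reverse]
    obtain ⟨m, hm⟩ := hodd
    rw [hm]
    have : (-1 : ℤ) ^ (2 * m + 1 + 1) = 1 := by
      rw [pow_succ, pow_succ, pow_mul]
      norm_num
    rw [this, one_mul]
  have hcop : IsCoprime (9 : ℤ) 11 := by
    rw [Int.isCoprime_iff_gcd_eq_one]
    decide
  have := hcop.mul_dvd h9 h11
  norm_num at this
  exact this
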